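/- Let Δ_1, …, Δ_d ∈ ℝ be nonzero and let (ς_1,…,ς_d) ∈ {-1,1}^d maximize f(σ) = Σ σ_i Δ_i subject to Π σ_i = 1. Then ς differs from the unconstrained optimizer σ_i = sign(Δ_i) in at most one index. -/

import Mathlib

open Finset

lemma flip_neg (Δ : ℝ) (hΔ : Δ ≠ 0) (s : ℝ) (hs : s = 1 ∨ s = -1)
    (h : s ≠ (if 0 ≤ Δ then (1 : ℝ) else -1)) : s * Δ < 0 := by
  rcases hs with hs | hs <;> subst hs <;> split_ifs at h with h0
  · exact absurd rfl h
  · simpa using not_le.mp h0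
  · have : 0 < Δ := lt_of_le_of_ne h0 (Ne.symm hΔ)
    nlinarith
  · exact absurd rfl h

/-- A constrained maximizer `ς` of `f(σ) = Σ σ_i Δ_i` over `σ ∈ {-1,1}^d` with
`Π σ_i = 1` (all `Δ_i ≠ 0`) differs from the unconstrained optimizer
`σ_i = sign Δ_i` in at most one index. -/
theorem maximizer_close_to_sign (d : ℕ) (Δ : Fin d → ℝ) (hΔ : ∀ i, Δ i ≠ 0)
    (ς : Fin d → ℝ) (hς : ∀ i, ς i = 1 ∨ ς i = -1) (hprod : (∏ i, ς i) = 1)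
    (hmax : ∀ σ : Fin d → ℝ, (∀ i, σ i = 1 ∨ σ i = -1) → (∏ i, σ i) = 1 →
      ∑ i, σ i * Δ i ≤ ∑ i, ς i * Δ i) :
    (Finset.univ.filter
        (fun i => ς i ≠ (if 0 ≤ Δ i then (1 : ℝ) else -1))).card ≤ 1 := by
  by_contra h
  push_neg at h
  obtain ⟨i, hi, j, hj, hij⟩ := Finset.one_lt_card.mp h
  rw [Finset.mem_filter] at hi hj
  have hineg : ς i * Δ i < 0 := flip_neg _ (hΔ i) _ (hς i) hi.2
  have hjneg : ς j * Δ j < 0 := flip_neg _ (hΔ j) _ (hς j) hj.2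
  set σ : Fin d → ℝ := fun k => ς k * (if k = i ∨ k = j then -1 else 1) with hσ
  have hσpm : ∀ k, σ k = 1 ∨ σ k = -1 := by
    intro k
    by_cases hk : k = i ∨ k = j <;> rcases hς k with h1 | h1 <;> simp [hσ, hk, h1]
  have hσprod : (∏ k, σ k) = 1 := by
    rw [hσ, Finset.prod_mul_distrib, hprod, one_mul]
    have : ∀ k : Fin d, (if k = i ∨ k = j then (-1 : ℝ) else 1)
        = if k ∈ ({i, j} : Finset (Fin d)) then -1 else 1 := by
      intro k; simp
    simp_rw [this]
    rw [Finset.prod_ite_mem, Finset.univ_inter, Finset.prod_pair hij]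
    norm_num
  have hle := hmax σ hσpm hσprod
  have hdiff : ∑ k, (σ k * Δ k - ς k * Δ k)
      = (σ i * Δ i - ς i * Δ i) + (σ j * Δ j - ς j * Δ j) := by
    refine Finset.sum_eq_add_of_mem i j (Finset.mem_univ i) (Finset.mem_univ j) hij ?_
    intro c _ hc
    obtain ⟨hci, hcj⟩ := hc
    simp [hσ, hci, hcj]
  have hsub : ∑ k, (σ k * Δ k - ς k * Δ k) = (∑ k, σ k * Δ k) - ∑ k, ς k * Δ k :=
    Finset.sum_sub_distrib (fun k => σ k * Δ k) (fun k => ς k * Δ k)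
  have hσi : σ i = -ς i := by simp [hσ]
  have hσj : σ j = -ς j := by simp [hσ]
  rw [hsub, hσi, hσj] at hdiff
  nlinarith [hdiff, hle, hineg, hjneg]
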